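/- arXiv:1703.06853 — 6 statements merged into one kernel-verified Lean document; each statement's English description precedes it below -/
import Mathlib

section
/- Let W(k) be stochastic matrices satisfying: (i) w_{ii}(k) ≥ δ and nonzero off-diagonal entries are ≥ δ (for fixed δ > 0 and all k); (ii) there exists B ≥ 1 such that for every k, the graph of W(k) + W(k+1) + ⋯ + W(k+B-1) is strongly connected. Then for every k, the product Φ(k+B,k) = W(k+B-1)⋯W(k) has all diagonal entries ≥ δ^B, and the directed graph on {1,…,n} whose edges are pairs (i,j) with Φ(k+B,k)_{ij} ≥ δ^B is strongly connected. -/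
open Matrix Finset Filter Topology

def Stochastic {n : ℕ} (W : Matrix (Fin n) (Fin n) ℝ) : Prop :=
  (∀ i j, 0 ≤ W i j) ∧ ∀ i, ∑ j, W i j = 1

noncomputable def vmax {n : ℕ} (hn : 0 < n) (x : Fin n → ℝ) : ℝ :=
  Finset.univ.sup' ⟨⟨0, hn⟩, Finset.mem_univ _⟩ x

noncomputable def vmin {n : ℕ} (hn : 0 < n) (x : Fin n → ℝ) : ℝ :=
  Finset.univ.inf' ⟨⟨0, hn⟩, Finset.mem_univ _⟩ x

def Phi {n : ℕ} (W : ℕ → Matrix (Fin n) (Fin n) ℝ) (k : ℕ) : ℕ → Matrix (Fin n) (Fin n) ℝ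
  | 0 => 1
  | j + 1 => W (k + j) * Phi W k j

lemma phi_nonneg {n : ℕ} (W : ℕ → Matrix (Fin n) (Fin n) ℝ)
    (hW : ∀ k, Stochastic (W k)) (k m : ℕ) (i j : Fin n) : 0 ≤ Phi W k m i j := by
  induction m generalizing i j with
  | zero =>
    simp only [Phi, Matrix.one_apply]
    split <;> norm_num
  | succ m ih =>
    simp only [Phi, Matrix.mul_apply]
    exact Finset.sum_nonneg fun l _ => mul_nonneg ((hW _).1 _ _) (ih _ _)

lemma phi_diag {n : ℕ} (W : ℕ → Matrix (Fin n) (Fin n) ℝ) (δ : ℝ) (hδ : 0 < δ)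
    (hW : ∀ k, Stochastic (W k)) (hdiag : ∀ k i, δ ≤ W k i i)
    (k m : ℕ) (i : Fin n) : δ ^ m ≤ Phi W k m i i := by
  induction m with
  | zero => simp [Phi]
  | succ m ih =>
    simp only [Phi, Matrix.mul_apply, pow_succ]
    calc δ ^ m * δ ≤ Phi W k m i i * W (k + m) i i := by
          apply mul_le_mul ih (hdiag _ _) hδ.le (phi_nonneg W hW _ _ _ _)
      _ = W (k + m) i i * Phi W k m i i := mul_comm _ _
      _ ≤ ∑ l, W (k + m) i l * Phi W k m l i := by
          apply Finset.single_le_sum (f := fun l => W (k+m) i l * Phi W k m l i)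
            (fun l _ => mul_nonneg ((hW _).1 _ _) (phi_nonneg W hW _ _ _ _)) (Finset.mem_univ i)

lemma phi_comp {n : ℕ} (W : ℕ → Matrix (Fin n) (Fin n) ℝ) (k a b : ℕ) :
    Phi W k (a + b) = Phi W (k + a) b * Phi W k a := by
  induction b with
  | zero => simp [Phi]
  | succ b ih =>
    show Phi W k (a + b + 1) = _
    simp only [Phi]
    rw [ih, ← Matrix.mul_assoc, show k + (a + b) = (k + a) + b from by omega]

theorem stmt6 {n : ℕ} (W : ℕ → Matrix (Fin n) (Fin n) ℝ) (δ : ℝ) (hδ : 0 < δ)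
    (hW : ∀ k, Stochastic (W k)) (hdiag : ∀ k i, δ ≤ W k i i)
    (hoff : ∀ k i j, i ≠ j → W k i j = 0 ∨ δ ≤ W k i j)
    (B : ℕ) (hB : 1 ≤ B)
    (hconn : ∀ k i j, Relation.ReflTransGen
      (fun a b => (∑ t ∈ Finset.range B, W (k + t)) a b ≠ 0) i j) :
    ∀ k, (∀ i, δ ^ B ≤ Phi W k B i i) ∧
      ∀ i j, Relation.ReflTransGen (fun a b => δ ^ B ≤ Phi W k B a b) i j := by
  intro k
  have hdiagB : ∀ i, δ ^ B ≤ Phi W k B i i := fun i => phi_diag W δ hδ hW hdiag k B i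
  refine ⟨hdiagB, fun i j => ?_⟩
  refine Relation.ReflTransGen.mono (fun a b hab => ?_) _ _ (hconn k i j)
  -- find t with W (k + t) a b ≠ 0
  have hab' : ∑ t ∈ Finset.range B, W (k + t) a b ≠ 0 := by
    simpa [Matrix.sum_apply] using hab
  obtain ⟨t, ht, hne⟩ := Finset.exists_ne_zero_of_sum_ne_zero hab'
  simp only [Finset.mem_range] at ht
  have hWt : δ ≤ W (k + t) a b := by
    by_cases h : a = b
    · subst h; exact hdiag _ _
    · rcases hoff (k + t) a b h with h0 | h1
      · exact absurd h0 hne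
      · exact h1
  -- decompose Phi W k B = Phi W (k+t+1) (B-t-1) * (W (k+t) * Phi W k t)
  have hB' : B = (t + 1) + (B - t - 1) := by omega
  have hdecomp : Phi W k B = Phi W (k + (t + 1)) (B - t - 1) * (W (k + t) * Phi W k t) := by
    conv_lhs => rw [hB', phi_comp]
    rfl
  rw [hdecomp]
  have h1 : δ ^ (t + 1) ≤ (W (k + t) * Phi W k t) a b := by
    simp only [Matrix.mul_apply]
    calc δ ^ (t + 1) = δ * δ ^ t := by ring
      _ ≤ W (k + t) a b * Phi W k t b b :=
        mul_le_mul hWt (phi_diag W δ hδ hW hdiag k t b) (pow_nonneg hδ.le _) (hδ.le.trans hWt)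
      _ ≤ ∑ l, W (k + t) a l * Phi W k t l b :=
        Finset.single_le_sum (f := fun l => W (k+t) a l * Phi W k t l b)
          (fun l _ => mul_nonneg ((hW _).1 _ _) (phi_nonneg W hW _ _ _ _)) (Finset.mem_univ b)
  have h2 : 0 ≤ (W (k + t) * Phi W k t) a b := (pow_nonneg hδ.le _).trans h1
  calc δ ^ B = δ ^ (B - t - 1) * δ ^ (t + 1) := by rw [← pow_add]; congr 1; omega
    _ ≤ Phi W (k + (t + 1)) (B - t - 1) a a * (W (k + t) * Phi W k t) a b :=
      mul_le_mul (phi_diag W δ hδ hW hdiag _ _ _) h1 (pow_nonneg hδ.le _)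
        (phi_nonneg W hW _ _ _ _)
    _ ≤ ∑ l, Phi W (k + (t + 1)) (B - t - 1) a l * (W (k + t) * Phi W k t) l b := by
      apply Finset.single_le_sum (f := fun l => Phi W (k + (t+1)) (B-t-1) a l * (W (k+t) * Phi W k t) l b)
        (fun l _ => mul_nonneg (phi_nonneg W hW _ _ _ _) ?_) (Finset.mem_univ a)
      simp only [Matrix.mul_apply]
      exact Finset.sum_nonneg fun m _ => mul_nonneg ((hW _).1 _ _) (phi_nonneg W hW _ _ _ _)
    _ = (Phi W (k + (t + 1)) (B - t - 1) * (W (k + t) * Phi W k t)) a b := by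
      rw [Matrix.mul_apply]
end

section
/- Let W₀ be a primitive stochastic matrix and let d be such that every entry of W₀^d is at least ε > 0. Let W(k) be a sequence of stochastic matrices, each equal either to W₀ or to some stochastic matrix commuting with W₀, and suppose W(k) = W₀ for infinitely many k. Then for every k there exists m > k such that every entry of the product Φ(m,k) = W(m-1)⋯W(k) is at least ε. -/
open Matrix Finset Filter Topology

private lemma stoch_one {n : ℕ} : Stochastic (1 : Matrix (Fin n) (Fin n) ℝ) := by
  constructor
  · intro i j
    by_cases h : i = j <;> simp [Matrix.one_apply, h]
  · intro i
    simp [Matrix.one_apply]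

private lemma stoch_mul {n : ℕ} {A B : Matrix (Fin n) (Fin n) ℝ}
    (hA : Stochastic A) (hB : Stochastic B) : Stochastic (A * B) := by
  constructor
  · intro i j
    rw [Matrix.mul_apply]
    exact Finset.sum_nonneg fun l _ => mul_nonneg (hA.1 i l) (hB.1 l j)
  · intro i
    simp only [Matrix.mul_apply]
    rw [Finset.sum_comm]
    calc ∑ l, ∑ j, A i l * B l j = ∑ l, A i l * ∑ j, B l j := by
          simp [Finset.mul_sum]
      _ = ∑ l, A i l := by simp [hB.2]
      _ = 1 := hA.2 i

private lemma stoch_pow {n : ℕ} {A : Matrix (Fin n) (Fin n) ℝ}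
    (hA : Stochastic A) : ∀ r, Stochastic (A ^ r)
  | 0 => by simpa using stoch_one
  | r + 1 => by rw [pow_succ]; exact stoch_mul (stoch_pow hA r) hA

private lemma eps_mul {n : ℕ} {T P : Matrix (Fin n) (Fin n) ℝ} {ε : ℝ}
    (hT : Stochastic T) (hP : ∀ i j, ε ≤ P i j) : ∀ i j, ε ≤ (T * P) i j := by
  intro i j
  rw [Matrix.mul_apply]
  calc ε = (∑ l, T i l) * ε := by rw [hT.2 i, one_mul]
    _ = ∑ l, T i l * ε := by rw [Finset.sum_mul]
    _ ≤ ∑ l, T i l * P l j :=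
        Finset.sum_le_sum fun l _ => mul_le_mul_of_nonneg_left (hP l j) (hT.1 i l)

open scoped Classical in
private lemma phi_decomp {n : ℕ} (W₀ : Matrix (Fin n) (Fin n) ℝ)
    (W : ℕ → Matrix (Fin n) (Fin n) ℝ) (hW : ∀ k, Stochastic (W k))
    (hWk : ∀ k, W k = W₀ ∨ W k * W₀ = W₀ * W k) (k : ℕ) :
    ∀ j, ∃ T : Matrix (Fin n) (Fin n) ℝ, Stochastic T ∧ T * W₀ = W₀ * T ∧
      Phi W k j = T * W₀ ^ ((Finset.range j).filter (fun i => W (k + i) = W₀)).card := by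
  intro j
  induction j with
  | zero => exact ⟨1, stoch_one, by rw [one_mul, mul_one], by simp [Phi]⟩
  | succ j ih =>
    obtain ⟨T, hT, hTc, hphi⟩ := ih
    rw [Finset.range_add_one, Finset.filter_insert]
    by_cases h : W (k + j) = W₀
    · refine ⟨T, hT, hTc, ?_⟩
      rw [if_pos h, Finset.card_insert_of_notMem (by simp)]
      show W (k + j) * Phi W k j = _
      rw [h, hphi, pow_succ, ← mul_assoc, ← mul_assoc, ← hTc]
      ring_nf
      rw [mul_assoc, mul_assoc, ← pow_succ', pow_succ]
    · rcases hWk (k + j) with h' | h'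
      · exact absurd h' h
      · refine ⟨W (k + j) * T, stoch_mul (hW _) hT, ?_, ?_⟩
        · rw [mul_assoc, hTc, ← mul_assoc, h', mul_assoc]
        · rw [if_neg h]
          show W (k + j) * Phi W k j = _
          rw [hphi, mul_assoc]

theorem stmt7 {n : ℕ} (W₀ : Matrix (Fin n) (Fin n) ℝ) (hW₀ : Stochastic W₀)
    (d : ℕ) (ε : ℝ) (hε : 0 < ε) (hd : ∀ i j, ε ≤ (W₀ ^ d) i j)
    (W : ℕ → Matrix (Fin n) (Fin n) ℝ) (hW : ∀ k, Stochastic (W k))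
    (hWk : ∀ k, W k = W₀ ∨ W k * W₀ = W₀ * W k)
    (hinf : {k | W k = W₀}.Infinite) :
    ∀ k, ∃ m > k, ∀ i j, ε ≤ Phi W k (m - k) i j := by
  classical
  intro k
  -- there is m > k with at least d occurrences of W₀ among W k, ..., W (m-1)
  have count_ge : ∀ D : ℕ, ∃ m, m > k ∧
      D ≤ ((Finset.range (m - k)).filter (fun i => W (k + i) = W₀)).card := by
    intro D
    induction D with
    | zero => exact ⟨k + 1, Nat.lt_succ_self k, Nat.zero_le _⟩
    | succ D ih =>
      obtain ⟨m, hm, hD⟩ := ih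
      obtain ⟨k', hk', hmk'⟩ := hinf.exists_gt m
      refine ⟨k' + 1, lt_trans hm hmk' |>.trans (Nat.lt_succ_self k'), ?_⟩
      have hkk' : k ≤ k' := le_of_lt (lt_trans hm hmk')
      have hmem : (k' - k) ∉ (Finset.range (m - k)).filter (fun i => W (k + i) = W₀) := by
        intro hc
        have := Finset.mem_range.mp (Finset.mem_filter.mp hc).1
        omega
      have hsub : insert (k' - k) ((Finset.range (m - k)).filter (fun i => W (k + i) = W₀))
          ⊆ (Finset.range (k' + 1 - k)).filter (fun i => W (k + i) = W₀) := by
        intro x hx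
        rcases Finset.mem_insert.mp hx with rfl | hx
        · refine Finset.mem_filter.mpr ⟨Finset.mem_range.mpr (by omega), ?_⟩
          have : k + (k' - k) = k' := by omega
          rw [this]; exact hk'
        · obtain ⟨hx1, hx2⟩ := Finset.mem_filter.mp hx
          refine Finset.mem_filter.mpr ⟨Finset.mem_range.mpr ?_, hx2⟩
          have := Finset.mem_range.mp hx1
          omega
      calc D + 1 ≤ ((Finset.range (m - k)).filter (fun i => W (k + i) = W₀)).card + 1 := by omega
        _ = (insert (k' - k) ((Finset.range (m - k)).filter (fun i => W (k + i) = W₀))).card :=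
            (Finset.card_insert_of_notMem hmem).symm
        _ ≤ _ := Finset.card_le_card hsub
  obtain ⟨m, hm, hcount⟩ := count_ge d
  obtain ⟨T, hT, _, hphi⟩ := phi_decomp W₀ W hW hWk k (m - k)
  refine ⟨m, hm, ?_⟩
  set r := ((Finset.range (m - k)).filter (fun i => W (k + i) = W₀)).card with hr
  have hpow : ∀ i j, ε ≤ (W₀ ^ r) i j := by
    have : W₀ ^ r = W₀ ^ (r - d) * W₀ ^ d := by
      rw [← pow_add]; congr 1; omega
    rw [this]
    exact eps_mul (stoch_pow hW₀ _) hd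
  rw [hphi]
  exact eps_mul hT hpow
end

section
/- Let W be a stochastic matrix whose associated directed graph is strongly connected and aperiodic (i.e., W is primitive). Then every solution x(k) of x(k+1) ≤ W·x(k) (entrywise) that is bounded from below converges to c·𝟙 for some c ∈ ℝ. -/
open Matrix Finset Filter Topology

theorem stmt13 {n : ℕ} (W : Matrix (Fin n) (Fin n) ℝ) (hW : Stochastic W)
    (hprim : ∃ d ≥ 1, ∀ i j, 0 < (W ^ d) i j)
    (x : ℕ → Fin n → ℝ) (hx : ∀ k, x (k + 1) ≤ W.mulVec (x k))
    (hbdd : ∃ c, ∀ k i, c ≤ x k i) :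
    ∃ c : ℝ, Tendsto (fun k => x k) atTop (𝓝 fun _ => c) := by
  rcases Nat.eq_zero_or_pos n with hn0 | hn
  · subst hn0
    refine ⟨0, ?_⟩
    have h : (fun k => x k) = fun _ => (fun _ => (0 : ℝ)) := by
      funext k i; exact i.elim0
    rw [h]; exact tendsto_const_nhds
  obtain ⟨d, hd1, hdpos⟩ := hprim
  obtain ⟨cb, hcb⟩ := hbdd
  set M : ℕ → ℝ := fun k => vmax hn (x k) with hMdef
  have hxM : ∀ k i, x k i ≤ M k := fun k i => Finset.le_sup' _ (Finset.mem_univ i)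
  have hstep : ∀ k, M (k + 1) ≤ M k := by
    intro k
    apply Finset.sup'_le
    intro i _
    calc x (k + 1) i ≤ W.mulVec (x k) i := hx k i
      _ = ∑ j, W i j * x k j := rfl
      _ ≤ ∑ j, W i j * M k :=
        Finset.sum_le_sum fun j _ => mul_le_mul_of_nonneg_left (hxM k j) (hW.1 i j)
      _ = M k := by rw [← Finset.sum_mul, hW.2 i, one_mul]
  have hanti : Antitone M := antitone_nat_of_succ_le hstep
  have hMlb : ∀ k, cb ≤ M k := fun k => le_trans (hcb k ⟨0, hn⟩) (hxM k ⟨0, hn⟩)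
  have hbdd' : BddBelow (Set.range M) := ⟨cb, by rintro _ ⟨k, rfl⟩; exact hMlb k⟩
  set c := ⨅ k, M k with hc
  have hMc : Tendsto M atTop (𝓝 c) := tendsto_atTop_ciInf hanti hbdd'
  set A := W ^ d with hAdef
  have hA1 : ∀ m i, ∑ j, (W ^ m) i j = 1 := by
    intro m
    induction m with
    | zero => intro i; simp [Matrix.one_apply]
    | succ m ih =>
      intro i
      rw [pow_succ']
      have : ∀ j, (W * W ^ m) i j = ∑ l, W i l * (W ^ m) l j := fun j => rfl
      calc ∑ j, (W * W ^ m) i j = ∑ j, ∑ l, W i l * (W ^ m) l j := by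
            exact Finset.sum_congr rfl fun j _ => this j
        _ = ∑ l, ∑ j, W i l * (W ^ m) l j := Finset.sum_comm
        _ = ∑ l, W i l * ∑ j, (W ^ m) l j := by
            exact Finset.sum_congr rfl fun l _ => (Finset.mul_sum _ _ _).symm
        _ = ∑ l, W i l := by
            exact Finset.sum_congr rfl fun l _ => by rw [ih l, mul_one]
        _ = 1 := hW.2 i
  have hApos : ∀ i j, 0 < A i j := hdpos
  have hmono : ∀ (u v : Fin n → ℝ), u ≤ v → W.mulVec u ≤ W.mulVec v := by
    intro u v huv i
    show ∑ j, W i j * u j ≤ ∑ j, W i j * v j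
    exact Finset.sum_le_sum fun j _ => mul_le_mul_of_nonneg_left (huv j) (hW.1 i j)
  have hiter : ∀ k, x (k + d) ≤ A.mulVec (x k) := by
    have H : ∀ m k, x (k + m) ≤ (W ^ m).mulVec (x k) := by
      intro m
      induction m with
      | zero => intro k; simp [Matrix.one_mulVec]
      | succ m ih =>
        intro k
        have h1 : x (k + m + 1) ≤ W.mulVec (x (k + m)) := hx (k + m)
        have h2 : W.mulVec (x (k + m)) ≤ W.mulVec ((W ^ m).mulVec (x k)) :=
          hmono _ _ (ih k)
        have h3 : W.mulVec ((W ^ m).mulVec (x k)) = (W ^ (m + 1)).mulVec (x k) := by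
          rw [Matrix.mulVec_mulVec, ← pow_succ']
        calc x (k + (m + 1)) = x (k + m + 1) := by ring_nf
          _ ≤ W.mulVec (x (k + m)) := h1
          _ ≤ W.mulVec ((W ^ m).mulVec (x k)) := h2
          _ = (W ^ (m + 1)).mulVec (x k) := h3
    exact fun k => H d k
  have hpne : ((Finset.univ : Finset (Fin n × Fin n))).Nonempty :=
    ⟨(⟨0, hn⟩, ⟨0, hn⟩), Finset.mem_univ _⟩
  set δ := Finset.univ.inf' hpne (fun p : Fin n × Fin n => A p.1 p.2) with hδdef
  have hδpos : 0 < δ := by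
    rw [hδdef, Finset.lt_inf'_iff]
    intro p _
    exact hApos p.1 p.2
  have hδle : ∀ j i, δ ≤ A j i := fun j i =>
    Finset.inf'_le _ (Finset.mem_univ ((j, i) : Fin n × Fin n))
  have hkey : ∀ k i, δ * (M k - x k i) ≤ M k - M (k + d) := by
    intro k i
    have hsub : 0 ≤ M k - x k i := sub_nonneg.2 (hxM k i)
    have h1 : ∀ j, x (k + d) j ≤ M k - δ * (M k - x k i) := by
      intro j
      have h2 : A j i * (M k - x k i) ≤ ∑ l, A j l * (M k - x k l) :=
        Finset.single_le_sum
          (f := fun l => A j l * (M k - x k l))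
          (fun l _ => mul_nonneg (hApos j l).le (sub_nonneg.2 (hxM k l)))
          (Finset.mem_univ i)
      have h3 : δ * (M k - x k i) ≤ A j i * (M k - x k i) :=
        mul_le_mul_of_nonneg_right (hδle j i) hsub
      have h4 : ∑ l, A j l * x k l = M k - ∑ l, A j l * (M k - x k l) := by
        have e1 : ∑ l, A j l * x k l
            = (∑ l, A j l * M k) - ∑ l, A j l * (M k - x k l) := by
          rw [← Finset.sum_sub_distrib]
          exact Finset.sum_congr rfl fun l _ => by ring
        rw [e1, ← Finset.sum_mul, hA1 d j, one_mul]
      calc x (k + d) j ≤ A.mulVec (x k) j := hiter k j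
        _ = ∑ l, A j l * x k l := rfl
        _ = M k - ∑ l, A j l * (M k - x k l) := h4
        _ ≤ M k - A j i * (M k - x k i) := by linarith
        _ ≤ M k - δ * (M k - x k i) := by linarith
    have h5 : M (k + d) ≤ M k - δ * (M k - x k i) :=
      Finset.sup'_le _ _ fun j _ => h1 j
    linarith
  refine ⟨c, ?_⟩
  rw [tendsto_pi_nhds]
  intro i
  have hlow : ∀ k, M k - (M k - M (k + d)) / δ ≤ x k i := by
    intro k
    have := hkey k i
    have h6 : M k - x k i ≤ (M k - M (k + d)) / δ := by
      rw [le_div_iff₀ hδpos, mul_comm]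
      exact this
    linarith
  have hshift : Tendsto (fun k => M (k + d)) atTop (𝓝 c) :=
    hMc.comp (tendsto_add_atTop_nat d)
  have hLc : Tendsto (fun k => M k - (M k - M (k + d)) / δ) atTop (𝓝 c) := by
    have h7 : Tendsto (fun k => M k - (M k - M (k + d)) / δ) atTop
        (𝓝 (c - (c - c) / δ)) := hMc.sub ((hMc.sub hshift).div_const δ)
    simpa using h7
  exact tendsto_of_tendsto_of_tendsto_of_le_of_le hLc hMc (fun k => hlow k)
    (fun k => hxM k i)
end

section
/- Let W be a stochastic matrix whose graph contains two distinct strongly connected components such that an arc leads from a node in one component to a node in the other (i.e., not all strong components are isolated). Then there exists a solution x(k) of x(k+1) ≤ W·x(k), bounded from below, that does not converge. -/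
open Matrix Finset Filter Topology

theorem stmt14 {n : ℕ} (W : Matrix (Fin n) (Fin n) ℝ) (hW : Stochastic W)
    (harc : ∃ i j : Fin n, 0 < W i j ∧
      ¬ Relation.ReflTransGen (fun a b => 0 < W a b) j i) :
    ∃ x : ℕ → Fin n → ℝ,
      (∀ k, x (k + 1) ≤ W.mulVec (x k)) ∧
      (∃ c, ∀ k i, c ≤ x k i) ∧
      ¬ ∃ L : Fin n → ℝ, Tendsto (fun k => x k) atTop (𝓝 L) := by
  classical
  obtain ⟨i, j, hij, hji⟩ := harc
  set rel : Fin n → Fin n → Prop := fun a b => 0 < W a b with hrel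
  set v : Fin n → ℝ := fun a => if Relation.ReflTransGen rel j a then 1 else 0 with hv
  have hv0 : ∀ a, 0 ≤ v a := by
    intro a; simp only [hv]; split <;> norm_num
  have key : v ≤ W.mulVec v := by
    intro a
    by_cases hT : Relation.ReflTransGen rel j a
    · have heq : W.mulVec v a = ∑ c, W a c := by
        unfold Matrix.mulVec dotProduct
        apply Finset.sum_congr rfl
        intro c _
        by_cases hc : Relation.ReflTransGen rel j c
        · simp [hv, hc]
        · have hz : W a c = 0 := by
            by_contra h
            have hpos : 0 < W a c := lt_of_le_of_ne (hW.1 a c) (Ne.symm h)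
            exact hc (hT.tail hpos)
          simp [hz]
      rw [heq, hW.2 a]
      simp [hv, hT]
    · have h0 : 0 ≤ W.mulVec v a := by
        show 0 ≤ ∑ c, W a c * v c
        apply Finset.sum_nonneg
        intro c _
        exact mul_nonneg (hW.1 a c) (hv0 c)
      simpa [hv, hT] using h0
  have hWv0 : ∀ a, 0 ≤ W.mulVec v a := by
    intro a
    show 0 ≤ ∑ c, W a c * v c
    apply Finset.sum_nonneg
    intro c _
    exact mul_nonneg (hW.1 a c) (hv0 c)
  have hmono : ∀ u w : Fin n → ℝ, u ≤ w → W.mulVec u ≤ W.mulVec w := by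
    intro u w huw a
    show ∑ c, W a c * u c ≤ ∑ c, W a c * w c
    apply Finset.sum_le_sum
    intro c _
    exact mul_le_mul_of_nonneg_left (huw c) (hW.1 a c)
  have hne : v ≠ W.mulVec v := by
    intro h
    have h1 : v i = 0 := by simp [hv, hji]
    have h2 : 0 < W.mulVec v i := by
      have hle : W i j * v j ≤ ∑ c, W i c * v c :=
        Finset.single_le_sum (f := fun c => W i c * v c)
          (fun c _ => mul_nonneg (hW.1 i c) (hv0 c)) (Finset.mem_univ j)
      have hvj : v j = 1 := by simp [hv, Relation.ReflTransGen.refl]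
      calc (0:ℝ) < W i j * v j := by rw [hvj]; simpa using hij
        _ ≤ ∑ c, W i c * v c := hle
        _ = W.mulVec v i := rfl
    rw [← h, h1] at h2
    exact lt_irrefl 0 h2
  refine ⟨fun k => if Even k then v else W.mulVec v, ?_, ⟨0, ?_⟩, ?_⟩
  · intro k
    rcases Nat.even_or_odd k with he | ho
    · have h1 : ¬ Even (k + 1) := by simp [Nat.even_add_one, he]
      simp only [he, h1, if_pos, if_neg, if_true, if_false]
      exact le_refl _
    · have h1 : Even (k + 1) := Nat.even_add_one.mpr (Nat.not_even_iff_odd.mpr ho)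
      have h2 : ¬ Even k := Nat.not_even_iff_odd.mpr ho
      simp only [h1, h2, if_true, if_false, if_pos, if_neg]
      exact le_trans key (hmono _ _ key)
  · intro k a
    dsimp only
    split
    · exact hv0 a
    · exact hWv0 a
  · rintro ⟨L, hL⟩
    have heven : Tendsto (fun m : ℕ => (fun k => if Even k then v else W.mulVec v) (2 * m)) atTop (𝓝 L) := by
      apply hL.comp
      apply tendsto_atTop_mono (fun m => by omega : ∀ m : ℕ, m ≤ 2 * m) tendsto_id
    have hodd : Tendsto (fun m : ℕ => (fun k => if Even k then v else W.mulVec v) (2 * m + 1)) atTop (𝓝 L) := by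
      apply hL.comp
      apply tendsto_atTop_mono (fun m => by omega : ∀ m : ℕ, m ≤ 2 * m + 1) tendsto_id
    have he1 : (fun m : ℕ => (fun k => if Even k then v else W.mulVec v) (2 * m)) = fun _ => v := by
      funext m
      simp [Nat.even_mul]
    have ho1 : (fun m : ℕ => (fun k => if Even k then v else W.mulVec v) (2 * m + 1)) = fun _ => W.mulVec v := by
      funext m
      have : ¬ Even (2 * m + 1) := by simp [Nat.even_add_one, Nat.even_mul]
      simp [this]
    rw [he1] at heven
    rw [ho1] at hodd
    have hv' : v = L := tendsto_nhds_unique tendsto_const_nhds heven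
    have hw' : W.mulVec v = L := tendsto_nhds_unique tendsto_const_nhds hodd
    exact hne (hv'.trans hw'.symm)
end

section
/- Let W(k) be stochastic matrices with symmetric zero patterns (w_{ij}(k) > 0 ⟺ w_{ji}(k) > 0), satisfying w_{ii}(k) ≥ δ and nonzero entries ≥ δ for a fixed δ > 0. Assume the graph with arc set {(i,j) : Σ_k w_{ij}(k) = ∞} is strongly connected. Then every solution of x(k+1) ≤ W(k)·x(k) (entrywise) bounded from below converges to c·𝟙 for some c ∈ ℝ. -/
open Matrix Finset Filter Topology

theorem stmt16 {n : ℕ} (W : ℕ → Matrix (Fin n) (Fin n) ℝ)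
    (hW : ∀ k, Stochastic (W k)) (δ : ℝ) (hδ : 0 < δ)
    (hsym : ∀ k i j, 0 < W k i j ↔ 0 < W k j i)
    (hdiag : ∀ k i, δ ≤ W k i i)
    (hoff : ∀ k i j, i ≠ j → W k i j = 0 ∨ δ ≤ W k i j)
    (hconn : ∀ i j, Relation.ReflTransGen
      (fun a b => Tendsto (fun K => ∑ k ∈ Finset.range K, W k a b) atTop atTop) i j)
    (x : ℕ → Fin n → ℝ) (hx : ∀ k, x (k + 1) ≤ (W k).mulVec (x k))
    (hbdd : ∃ c, ∀ k i, c ≤ x k i) :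
    ∃ c : ℝ, Tendsto (fun k => x k) atTop (𝓝 fun _ => c) := by
  classical
  rcases Nat.eq_zero_or_pos n with hn | hn
  · subst hn
    refine ⟨0, ?_⟩
    have hx0 : (fun k => x k) = fun _ => (fun _ : Fin 0 => (0 : ℝ)) := by
      funext k i; exact i.elim0
    rw [hx0]; exact tendsto_const_nhds
  · obtain ⟨c, hc⟩ := hbdd
    set i0 : Fin n := ⟨0, hn⟩ with hi0
    have hneU : (Finset.univ : Finset (Fin n)).Nonempty := ⟨i0, mem_univ _⟩
    set M : ℕ → ℝ := fun k => vmax hn (x k) with hMdef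
    have hMle : ∀ k i, x k i ≤ M k := fun k i => Finset.le_sup' _ (mem_univ i)
    have hWnn : ∀ k i j, 0 ≤ W k i j := fun k => (hW k).1
    have hWrow : ∀ k i, ∑ j, W k i j = 1 := fun k => (hW k).2
    have hW1 : ∀ k i j, W k i j ≤ 1 := by
      intro k i j
      calc W k i j ≤ ∑ j, W k i j :=
            Finset.single_le_sum (fun j _ => hWnn k i j) (mem_univ j)
        _ = 1 := hWrow k i
    have hδ1 : δ ≤ 1 := le_trans (hdiag 0 i0) (hW1 0 i0 i0)
    have hmv : ∀ k p, (W k).mulVec (x k) p = ∑ j, W k p j * x k j := by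
      intro k p; simp [Matrix.mulVec, dotProduct]
    have hmul : ∀ k i, (W k).mulVec (x k) i ≤ M k := by
      intro k i
      rw [hmv]
      calc ∑ j, W k i j * x k j ≤ ∑ j, W k i j * M k :=
            Finset.sum_le_sum fun j _ => mul_le_mul_of_nonneg_left (hMle k j) (hWnn k i j)
        _ = M k := by rw [← Finset.sum_mul, hWrow k i, one_mul]
    have hMone : ∀ k, M (k + 1) ≤ M k := by
      intro k
      apply Finset.sup'_le
      intro i _
      exact le_trans (hx k i) (hmul k i)
    have hManti : Antitone M := antitone_nat_of_succ_le hMone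
    have hMlb : ∀ k, c ≤ M k := fun k => le_trans (hc k i0) (hMle k i0)
    have hbdd' : BddBelow (Set.range M) := ⟨c, by rintro _ ⟨k, rfl⟩; exact hMlb k⟩
    set L : ℝ := ⨅ k, M k with hLdef
    have hML : Tendsto M atTop (𝓝 L) := tendsto_atTop_ciInf hManti hbdd'
    have hLle : ∀ k, L ≤ M k := fun k => ciInf_le hbdd' k
    set d : ℕ → Fin n → ℝ := fun k i => M k - x k i with hddef
    have hdnn : ∀ k i, 0 ≤ d k i := fun k i => sub_nonneg.2 (hMle k i)
    -- key recursion
    have key : ∀ k p, (∑ j, W k p j * d k j) + (M (k + 1) - M k) ≤ d (k + 1) p := by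
      intro k p
      have h1 : x (k + 1) p ≤ ∑ j, W k p j * x k j := by rw [← hmv]; exact hx k p
      have h2 : ∑ j, W k p j * d k j = M k - ∑ j, W k p j * x k j := by
        have : ∀ j ∈ Finset.univ, W k p j * d k j = W k p j * M k - W k p j * x k j := by
          intro j _; simp [hddef, mul_sub]
        rw [Finset.sum_congr rfl this, Finset.sum_sub_distrib, ← Finset.sum_mul,
          hWrow k p, one_mul]
      have h3 : d (k + 1) p = M (k + 1) - x (k + 1) p := rfl
      linarith
    -- non-crossing step
    have stepA : ∀ (k : ℕ) (S : Finset (Fin n)) (m : ℝ), ∀ p ∈ S,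
        (∀ j, j ∉ S → W k p j = 0) → (∀ j ∈ S, m ≤ d k j) →
        m + (M (k + 1) - M k) ≤ d (k + 1) p := by
      intro k S m p hp hz hm
      have h1 : ∑ j, W k p j * d k j = ∑ j ∈ S, W k p j * d k j :=
        (Finset.sum_subset (Finset.subset_univ S)
          (fun j _ hj => by rw [hz j hj, zero_mul])).symm
      have h2 : ∑ j ∈ S, W k p j = 1 := by
        rw [Finset.sum_subset (Finset.subset_univ S) (fun j _ hj => hz j hj)]
        exact hWrow k p
      have h3 : m ≤ ∑ j ∈ S, W k p j * d k j := by
        calc m = ∑ j ∈ S, W k p j * m := by rw [← Finset.sum_mul, h2, one_mul]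
          _ ≤ ∑ j ∈ S, W k p j * d k j :=
            Finset.sum_le_sum fun j hj => mul_le_mul_of_nonneg_left (hm j hj) (hWnn k p j)
      have h4 := key k p
      rw [h1] at h4
      linarith
    -- crossing step
    have stepB : ∀ (k : ℕ) (S : Finset (Fin n)) (m : ℝ) (p sel : Fin n), sel ∈ S →
        δ ≤ W k p sel → (∀ j ∈ S, m ≤ d k j) →
        δ * m + (M (k + 1) - M k) ≤ d (k + 1) p := by
      intro k S m p sel hselS hsel hm
      have h1 : W k p sel * d k sel ≤ ∑ j, W k p j * d k j :=
        Finset.single_le_sum (fun j _ => mul_nonneg (hWnn k p j) (hdnn k j)) (mem_univ sel)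
      have h2 : δ * m ≤ W k p sel * d k sel := by
        rcases le_or_gt 0 m with h | h
        · exact mul_le_mul hsel (hm sel hselS) h (le_trans hδ.le hsel)
        · have : 0 ≤ W k p sel * d k sel := mul_nonneg (hWnn k p sel) (hdnn k sel)
          nlinarith
      have h4 := key k p
      linarith
    -- divergence gives activity
    have hactive : ∀ (a b : Fin n),
        Tendsto (fun K => ∑ k ∈ Finset.range K, W k a b) atTop atTop →
        ∀ K, ∃ k, K ≤ k ∧ 0 < W k a b := by
      intro a b htend K
      by_contra hcon
      push_neg at hcon
      have hconst : ∀ m, K ≤ m →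
          ∑ k ∈ Finset.range m, W k a b ≤ ∑ k ∈ Finset.range K, W k a b := by
        intro m hm
        rw [← Finset.sum_range_add_sum_Ico (fun k => W k a b) hm]
        have : ∑ k ∈ Finset.Ico K m, W k a b ≤ 0 := by
          apply Finset.sum_nonpos
          intro k hk
          have := hcon k (Finset.mem_Ico.1 hk).1
          linarith
        linarith
      obtain ⟨m, hm1, hm2⟩ :=
        ((htend.eventually_ge_atTop ((∑ k ∈ Finset.range K, W k a b) + 1)).and
          (eventually_ge_atTop K)).exists
      have := hconst m hm2
      linarith
    -- boundary crossing from connectivity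
    have hbound : ∀ (S : Finset (Fin n)) (a b : Fin n),
        Relation.ReflTransGen
          (fun a b => Tendsto (fun K => ∑ k ∈ Finset.range K, W k a b) atTop atTop) a b →
        a ∈ S → b ∉ S → ∃ p ∈ S, ∃ q, q ∉ S ∧
          Tendsto (fun K => ∑ k ∈ Finset.range K, W k p q) atTop atTop := by
      intro S a b h
      induction h with
      | refl => intro ha hb; exact absurd ha hb
      | @tail m b' h1 h2 ih =>
        intro ha hb
        by_cases hm : m ∈ S
        · exact ⟨m, hm, b', hb, h2⟩
        · exact ih ha hm
    -- gaps tend to zero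
    have hd0 : ∀ i, Tendsto (fun k => d k i) atTop (𝓝 0) := by
      intro i
      rw [tendsto_order]
      constructor
      · intro a ha
        exact Eventually.of_forall fun k => lt_of_lt_of_le ha (hdnn k i)
      · intro ε hε
        by_contra hcon
        have hfreq : ∃ᶠ k in atTop, ¬ d k i < ε := not_eventually.1 hcon
        have hαpos : 0 < δ ^ (n - 1) * ε := mul_pos (pow_pos hδ _) hε
        have hev : ∀ᶠ k in atTop, M k < L + δ ^ (n - 1) * ε :=
          hML.eventually_lt_const (lt_add_of_pos_right L hαpos)
        obtain ⟨K, hK⟩ := eventually_atTop.1 hev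
        obtain ⟨k0, hk0K, hk0'⟩ := (frequently_atTop.1 hfreq) K
        have hk0 : ε ≤ d k0 i := not_lt.1 hk0'
        -- contradiction when invariant covers everything
        have habs : ∀ k, k0 ≤ k →
            (∀ p : Fin n, δ ^ (n - 1) * ε + (M k - M k0) ≤ d k p) → False := by
          intro k hk hp
          obtain ⟨q, _, hqe⟩ := Finset.exists_mem_eq_sup'
            (⟨i0, mem_univ i0⟩ : (Finset.univ : Finset (Fin n)).Nonempty) (x k)
          have hdq : d k q = 0 := by
            have : M k = x k q := hqe
            simp [hddef, ← this]
          have h1 := hp q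
          rw [hdq] at h1
          have h2 : M k0 < L + δ ^ (n - 1) * ε := hK k0 hk0K
          have h3 : L ≤ M k := hLle k
          linarith
        -- main growth induction
        have main : ∀ t : ℕ, ∀ S : Finset (Fin n), ∀ k : ℕ, k0 ≤ k → S.Nonempty →
            n - S.card ≤ t →
            (∀ p ∈ S, δ ^ (S.card - 1) * ε + (M k - M k0) ≤ d k p) → False := by
          intro t
          induction t with
          | zero =>
            intro S k hk hSne hcard hinv
            have hScard : S.card = n := by
              have h1 : S.card ≤ n := by
                simpa using Finset.card_le_univ S
              omega
            have hSuniv : S = Finset.univ := Finset.eq_univ_of_card S (by simpa using hScard)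
            refine habs k hk fun p => ?_
            have := hinv p (hSuniv ▸ mem_univ p)
            rwa [hScard] at this
          | succ t ih =>
            intro S k hk hSne hcard hinv
            by_cases hSuniv : S = Finset.univ
            · refine habs k hk fun p => ?_
              have hScard : S.card = n := by rw [hSuniv]; simp
              have := hinv p (hSuniv ▸ mem_univ p)
              rwa [hScard] at this
            · -- pick a node outside S
              obtain ⟨j, hj⟩ : ∃ j, j ∉ S := by
                by_contra hcon2
                push_neg at hcon2
                exact hSuniv (Finset.eq_univ_iff_forall.2 hcon2)
              obtain ⟨a0, ha0⟩ := hSne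
              obtain ⟨p₀, hp₀, q₀, hq₀, hconn₀⟩ := hbound S a0 j (hconn a0 j) ha0 hj
              -- least crossing time ≥ k
              have hPex : ∃ T, k ≤ T ∧ ∃ a ∈ S, ∃ b, b ∉ S ∧ 0 < W T a b := by
                obtain ⟨T, hT1, hT2⟩ := hactive p₀ q₀ hconn₀ k
                exact ⟨T, hT1, p₀, hp₀, q₀, hq₀, hT2⟩
              set T := Nat.find hPex with hTdef
              obtain ⟨hkT, a, haS, b, hbS, hWab⟩ := Nat.find_spec hPex
              have hTmin : ∀ m, m < T → ¬(k ≤ m ∧ ∃ a ∈ S, ∃ b, b ∉ S ∧ 0 < W m a b) :=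
                fun m hm => Nat.find_min hPex hm
              -- invariant propagates up to T
              have prop : ∀ s : ℕ, k + s ≤ T →
                  ∀ p ∈ S, δ ^ (S.card - 1) * ε + (M (k + s) - M k0) ≤ d (k + s) p := by
                intro s
                induction s with
                | zero => intro _ p hp; simpa using hinv p hp
                | succ s ihs =>
                  intro hsT p hp
                  have hlt : k + s < T := by omega
                  have hprev := ihs (by omega)
                  have hnc : ∀ q, q ∉ S → W (k + s) p q = 0 := by
                    intro q hq
                    have hnP := hTmin (k + s) hlt
                    push_neg at hnP
                    have := hnP (by omega) p hp q hq
                    have h0 := hWnn (k + s) p q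
                    linarith
                  have := stepA (k + s) S (δ ^ (S.card - 1) * ε + (M (k + s) - M k0))
                    p hp hnc hprev
                  have heq : k + (s + 1) = (k + s) + 1 := by omega
                  rw [heq]
                  linarith
              have hpropT : ∀ p ∈ S, δ ^ (S.card - 1) * ε + (M T - M k0) ≤ d T p := by
                have h := prop (T - k) (by omega)
                have heq : k + (T - k) = T := by omega
                rwa [heq] at h
              -- grow the set at time T
              have hba : b ≠ a := fun h => hbS (h ▸ haS)
              have hWba : δ ≤ W T b a := by
                have hpos : 0 < W T b a := (hsym T a b).1 hWab
                rcases hoff T b a hba with h | h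
                · rw [h] at hpos; exact absurd hpos (lt_irrefl 0)
                · exact h
              have hMTk0 : M T ≤ M k0 := hManti (by omega)
              have hstep : ∀ p ∈ insert b S,
                  δ ^ S.card * ε + (M (T + 1) - M k0) ≤ d (T + 1) p := by
                intro p hp
                have hpow : δ * δ ^ (S.card - 1) = δ ^ S.card := by
                  rw [← pow_succ']
                  congr 1
                  have : 1 ≤ S.card := Finset.card_pos.2 ⟨a0, ha0⟩
                  omega
                have hkey : δ * (δ ^ (S.card - 1) * ε + (M T - M k0)) + (M (T + 1) - M T)
                    ≤ d (T + 1) p := by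
                  rcases Finset.mem_insert.1 hp with rfl | hpS
                  · exact stepB T S _ p a haS hWba hpropT
                  · exact stepB T S _ p p hpS (hdiag T p) hpropT
                have hgoal : δ ^ S.card * ε + (M (T + 1) - M k0) ≤
                    δ * (δ ^ (S.card - 1) * ε + (M T - M k0)) + (M (T + 1) - M T) := by
                  have hexp : δ * (δ ^ (S.card - 1) * ε) = δ ^ S.card * ε := by
                    rw [← mul_assoc, hpow]
                  nlinarith [mul_nonneg (sub_nonneg.2 hδ1) (sub_nonneg.2 hMTk0)]
                linarith
              have hcard' : (insert b S).card = S.card + 1 :=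
                Finset.card_insert_of_notMem hbS
              refine ih (insert b S) (T + 1) (by omega) ⟨b, Finset.mem_insert_self b S⟩
                ?_ ?_
              · rw [hcard']
                have h1 : S.card ≤ n := by simpa using Finset.card_le_univ S
                omega
              · intro p hp
                rw [hcard']
                simpa using hstep p hp
        -- start the induction with S = {i}, k = k0
        refine main n {i} k0 le_rfl ⟨i, Finset.mem_singleton_self i⟩ (by omega) ?_
        intro p hp
        rw [Finset.mem_singleton.1 hp]
        simpa using hk0
    -- conclude
    refine ⟨L, ?_⟩
    rw [tendsto_pi_nhds]
    intro i
    have h1 : Tendsto (fun k => M k - d k i) atTop (𝓝 (L - 0)) := hML.sub (hd0 i)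
    rw [sub_zero] at h1
    exact h1.congr fun k => by simp [hddef]
end

section
/- Let A be a stochastic n×n matrix with every entry at least ε > 0, and let x, y ∈ ℝ^n with y ≤ A·x entrywise. Then min_j y_j ≥ min_j x_j is not guaranteed, but max_j y_j ≤ max_j x_j - ε·(max_j x_j - min_j x_j), i.e., the maximum decreases by at least ε times the spread of x. -/
open Matrix Finset Filter Topology

theorem stmt19 {n : ℕ} (hn : 0 < n) (A : Matrix (Fin n) (Fin n) ℝ)
    (hA : Stochastic A) (ε : ℝ) (hε : 0 < ε) (hAe : ∀ i j, ε ≤ A i j)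
    (x y : Fin n → ℝ) (hy : y ≤ A.mulVec x) :
    vmax hn y ≤ vmax hn x - ε * (vmax hn x - vmin hn x) := by
  obtain ⟨hpos, hsum⟩ := hA
  set M := vmax hn x with hM
  set m := vmin hn x with hm
  obtain ⟨j0, -, hj0⟩ := Finset.exists_mem_eq_inf' ⟨⟨0, hn⟩, Finset.mem_univ _⟩ x
  have hxm : ∀ j, m ≤ x j := fun j => Finset.inf'_le _ (Finset.mem_univ j)
  have hxM : ∀ j, x j ≤ M := fun j => Finset.le_sup' _ (Finset.mem_univ j)
  have hmM : m ≤ M := (hxm j0).trans (hxM j0)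
  apply Finset.sup'_le
  intro i _
  have h1 : y i ≤ ∑ j, A i j * x j := hy i
  have hsplit : ∑ j, A i j * x j
      = A i j0 * (x j0 - M) + ∑ j ∈ Finset.univ.erase j0, A i j * (x j - M) + M := by
    have : ∑ j, A i j * (x j - M) =
        A i j0 * (x j0 - M) + ∑ j ∈ Finset.univ.erase j0, A i j * (x j - M) :=
      (Finset.add_sum_erase _ _ (Finset.mem_univ j0)).symm
    have h2 : ∑ j, A i j * (x j - M) = (∑ j, A i j * x j) - M := by
      simp [mul_sub, Finset.sum_sub_distrib, ← Finset.sum_mul, hsum i]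
    linarith [this, h2]
  have hrest : ∑ j ∈ Finset.univ.erase j0, A i j * (x j - M) ≤ 0 := by
    apply Finset.sum_nonpos
    intro j _
    exact mul_nonpos_of_nonneg_of_nonpos (hpos i j) (by linarith [hxM j])
  have hj0le : A i j0 * (x j0 - M) ≤ ε * (m - M) := by
    have hx0 : x j0 = m := hj0.symm
    rw [hx0]
    rcases eq_or_lt_of_le hmM with h | h
    · simp [h]
    · have : m - M < 0 := by linarith
      nlinarith [hAe i j0]
  linarith
end
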